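/- Affine form of the system-level pseudo-gradient: in the setting of the system-level objective — matrices A ∈ ℝ^{n_x×n_x}, B^p ∈ ℝ^{n_x×n_u^p} for players p = 1,…,P, E ∈ ℝ^{n_x×m}, weights W_x^p ∈ ℝ^{n_z×n_x}, W_u^p ∈ ℝ^{n_z×n_u^p} with (W_u^p)ᵀ W_x^p = 0, noise matrix W_w ∈ ℝ^{m×n_w}, horizon N ≥ 1; joint input kernels Φ_u = (Φ_u^1, …, Φ_u^P) with Φ_u^p : {0,…,N} → ℝ^{n_u^p×m}; state response Φ_x defined by Φ_x(0) = 0, Φ_x(1) = E + Σ_p B^p Φ_u^p(0), Φ_x(n+1) = A Φ_x(n) + Σ_p B^p Φ_u^p(n) for 1 ≤ n ≤ N−1; and objectives J^p(Φ_u) = Σ_{n=0}^{N} ‖(W_x^p Φ_x(n) + W_u^p Φ_u^p(n)) W_w‖_F² — the partial gradient of J^p with respect to Φ_u^p is the affine map ∇_{Φ_u^p} J^p(Φ_u) = 2·Σ_{q=1}^{P} (H^{pp})ᵀ (H^{pq}) Φ_u^q (W_w W_wᵀ) + h^p, where Φ_u^q is regarded as the (N+1)·n_u^q × m matrix stacking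 its components, H^{pq} is the block-lower-triangular matrix with blocks H^{pq}_{n,n'} = W_u^p if n = n' and p = q, H^{pq}_{n,n'} = W_x^p A^{(n−1)−n'} B^q if n > n', and H^{pq}_{n,n'} = 0 otherwise (indices 0 ≤ n, n' ≤ N), and h^p is a constant matrix independent of Φ_u (arising from the initial-condition term E). -/

import Mathlib

open scoped Matrix

/-- The `n`-th block row (of height `r`) of a stacked matrix with rows indexed by
`Fin k × Fin r`. -/
def blockRow {k r c : ℕ} (X : Matrix (Fin k × Fin r) (Fin c) ℝ) (n : Fin k) :
    Matrix (Fin r) (Fin c) ℝ :=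
  Matrix.of fun j i => X (n, j) i

/-- The block-lower-triangular matrix `H^{pq}` of the system-level game: block
`(n, n')` equals `W_u^p` if `n = n'` and `p = q`, equals `W_x^p A^{(n-1)-n'} B^q` if
`n > n'`, and `0` otherwise. -/
def Hblk {P nz nx : ℕ} {nu : Fin P → ℕ} (N : ℕ)
    (A : Matrix (Fin nx) (Fin nx) ℝ)
    (Wx : Fin P → Matrix (Fin nz) (Fin nx) ℝ)
    (Wu : (p : Fin P) → Matrix (Fin nz) (Fin (nu p)) ℝ)
    (B : (q : Fin P) → Matrix (Fin nx) (Fin (nu q)) ℝ)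
    (p q : Fin P) :
    Matrix (Fin (N + 1) × Fin nz) (Fin (N + 1) × Fin (nu q)) ℝ :=
  Matrix.of fun ni n'j =>
    if (ni.1 : ℕ) = (n'j.1 : ℕ) then
      (if hpq : p = q then Wu p ni.2 (Fin.cast (congrArg nu hpq.symm) n'j.2) else 0)
    else if (n'j.1 : ℕ) < (ni.1 : ℕ) then
      (Wx p * A ^ ((ni.1 : ℕ) - 1 - (n'j.1 : ℕ)) * B q) ni.2 n'j.2
    else 0

lemma blockRow_add {k r c : ℕ} (X Y : Matrix (Fin k × Fin r) (Fin c) ℝ) (n : Fin k) :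
    blockRow (X + Y) n = blockRow X n + blockRow Y n := rfl

lemma blockRow_mul {k r c d : ℕ} (X : Matrix (Fin k × Fin r) (Fin c) ℝ)
    (W : Matrix (Fin c) (Fin d) ℝ) (n : Fin k) :
    blockRow (X * W) n = blockRow X n * W := by
  ext j i; simp [blockRow, Matrix.mul_apply]

lemma blockTrace {k r c : ℕ} (X Y : Matrix (Fin k × Fin r) (Fin c) ℝ) :
    Matrix.trace (Xᵀ * Y) = ∑ n : Fin k, Matrix.trace ((blockRow X n)ᵀ * (blockRow Y n)) := by
  simp only [Matrix.trace, Matrix.diag, Matrix.mul_apply, Matrix.transpose_apply, blockRow,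
    Matrix.of_apply, Fintype.sum_prod_type]
  rw [Finset.sum_comm]

lemma Hrow {P nz nx : ℕ} {nu : Fin P → ℕ} (N : ℕ)
    (A : Matrix (Fin nx) (Fin nx) ℝ)
    (Wx : Fin P → Matrix (Fin nz) (Fin nx) ℝ)
    (Wu : (p : Fin P) → Matrix (Fin nz) (Fin (nu p)) ℝ)
    (B : (q : Fin P) → Matrix (Fin nx) (Fin (nu q)) ℝ)
    (p : Fin P) {m : ℕ}
    (Φs : (q : Fin P) → Matrix (Fin (N + 1) × Fin (nu q)) (Fin m) ℝ)
    (n : Fin (N + 1)) :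
    blockRow (∑ q, Hblk N A Wx Wu B p q * Φs q) n
      = Wu p * blockRow (Φs p) n
        + ∑ q, ∑ n' : Fin (N + 1),
            if (n' : ℕ) < (n : ℕ) then
              Wx p * A ^ ((n : ℕ) - 1 - (n' : ℕ)) * B q * blockRow (Φs q) n'
            else 0 := by
  ext j i
  simp only [blockRow, Matrix.of_apply, Matrix.sum_apply, Matrix.add_apply,
    Matrix.mul_apply, Fintype.sum_prod_type, Hblk]
  have split : ∀ (n' : Fin (N + 1)) (a b : ℝ),
      (if (n : ℕ) = (n' : ℕ) then a else if n' < n then b else 0)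
        = (if n' = n then a else 0) + (if n' < n then b else 0) := by
    intro n' a b
    rcases eq_or_ne n' n with h | h
    · subst h; simp
    · have hv : ¬ ((n : ℕ) = (n' : ℕ)) := fun hc => h (Fin.ext hc.symm)
      simp [hv, h]
  simp only [apply_ite (fun M : Matrix (Fin nz) (Fin m) ℝ => M j i), Matrix.zero_apply]
  simp [apply_ite (fun M : Matrix (Fin nz) (Fin m) ℝ => M j i), Matrix.mul_apply]
  simp only [split, Finset.sum_add_distrib, Finset.sum_ite_eq', Finset.mem_univ, if_true,
    Finset.sum_dite_eq]
  simp [Matrix.mul_apply]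

lemma phix_formula {P nx m : ℕ} {nu : Fin P → ℕ} {N : ℕ} (hN : 1 ≤ N)
    (A : Matrix (Fin nx) (Fin nx) ℝ)
    (B : (q : Fin P) → Matrix (Fin nx) (Fin (nu q)) ℝ)
    (E : Matrix (Fin nx) (Fin m) ℝ)
    (Φxf : ((q : Fin P) → Matrix (Fin (N + 1) × Fin (nu q)) (Fin m) ℝ) →
      ℕ → Matrix (Fin nx) (Fin m) ℝ)
    (Φs : (q : Fin P) → Matrix (Fin (N + 1) × Fin (nu q)) (Fin m) ℝ)
    (hΦx1 : Φxf Φs 1 = E + ∑ q, B q * blockRow (Φs q) 0)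
    (hΦxrec : ∀ n, ∀ _ : 1 ≤ n, ∀ _ : n ≤ N - 1,
      Φxf Φs (n + 1) = A * Φxf Φs n + ∑ q, B q * blockRow (Φs q) ⟨n, Nat.lt_succ_of_le (by omega)⟩) :
    ∀ n : ℕ, 1 ≤ n → n ≤ N →
      Φxf Φs n = A ^ (n - 1) * E
        + ∑ q, ∑ n' : Fin (N + 1),
            if (n' : ℕ) < n then A ^ (n - 1 - (n' : ℕ)) * B q * blockRow (Φs q) n' else 0 := by
  intro n hn
  induction n, hn using Nat.le_induction with
  | base =>
    intro _
    rw [hΦx1]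
    have h0 : ∀ q : Fin P, ∀ n' : Fin (N + 1),
        (if (n' : ℕ) < 1 then A ^ (1 - 1 - (n' : ℕ)) * B q * blockRow (Φs q) n' else 0)
          = (if n' = 0 then B q * blockRow (Φs q) 0 else 0) := by
      intro q n'
      rcases eq_or_ne n' 0 with h | h
      · subst h; simp
      · have : ¬ ((n' : ℕ) < 1) := by
          simp only [Nat.lt_one_iff]
          exact fun hc => h (Fin.ext (by simpa using hc))
        simp [this, h]
    simp only [h0, Finset.sum_ite_eq', Finset.mem_univ, if_true]
    simp
  | succ n hn IH =>
    intro hn1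
    have hrec := hΦxrec n hn (by omega)
    rw [hrec, IH (by omega)]
    have key : ∀ q : Fin P,
        A * (∑ n' : Fin (N + 1),
            if (n' : ℕ) < n then A ^ (n - 1 - (n' : ℕ)) * B q * blockRow (Φs q) n' else 0)
          = ∑ n' : Fin (N + 1),
            if (n' : ℕ) < n then A ^ (n - (n' : ℕ)) * B q * blockRow (Φs q) n' else 0 := by
      intro q
      rw [Matrix.mul_sum]
      refine Finset.sum_congr rfl fun n' _ => ?_
      split
      · next h =>
        rw [← Matrix.mul_assoc, ← Matrix.mul_assoc, ← pow_succ']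
        congr 3
        omega
      · simp
    have hsplit : ∀ q : Fin P,
        (∑ n' : Fin (N + 1),
            if (n' : ℕ) < n + 1 then A ^ (n + 1 - 1 - (n' : ℕ)) * B q * blockRow (Φs q) n' else 0)
          = (∑ n' : Fin (N + 1),
              if (n' : ℕ) < n then A ^ (n - (n' : ℕ)) * B q * blockRow (Φs q) n' else 0)
            + B q * blockRow (Φs q) ⟨n, by omega⟩ := by
      intro q
      have hinner : ∀ n' : Fin (N + 1),
          (if (n' : ℕ) < n + 1 then A ^ (n - (n' : ℕ)) * B q * blockRow (Φs q) n' else 0)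
            = (if (n' : ℕ) < n then A ^ (n - (n' : ℕ)) * B q * blockRow (Φs q) n' else 0)
              + (if n' = ⟨n, by omega⟩ then B q * blockRow (Φs q) ⟨n, by omega⟩ else 0) := by
        intro n'
        rcases eq_or_ne n' ⟨n, by omega⟩ with h | h
        · subst h; simp
        · have hne : (n' : ℕ) ≠ n := fun hc => h (Fin.ext (by simpa using hc))
          rcases lt_or_ge (n' : ℕ) n with hlt | hge
          · have hlt1 : (n' : ℕ) < n + 1 := by omega
            simp [hlt, hlt1, h]
          · have h1 : ¬ ((n' : ℕ) < n + 1) := by omega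
            have h2 : ¬ ((n' : ℕ) < n) := by omega
            simp [h1, h2, h]
      simp only [Nat.add_sub_cancel]
      rw [Finset.sum_congr rfl fun n' _ => hinner n']
      simp [Finset.sum_add_distrib, Finset.sum_ite_eq']
    rw [Matrix.mul_add, Matrix.mul_sum]
    simp only [key]
    have hA : A * (A ^ (n - 1) * E) = A ^ (n + 1 - 1) * E := by
      rw [← Matrix.mul_assoc, ← pow_succ']
      congr 2
      omega
    rw [hA]
    rw [add_assoc, ← Finset.sum_add_distrib]
    congr 1
    exact Finset.sum_congr rfl fun q _ => (hsplit q).symm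

/-- The stacked constant (initial-condition) matrix `G`: block `n` is
`W_x^p A^{n-1} E` for `n ≥ 1` and `0` for `n = 0`. -/
def Gmat {nz nx m : ℕ} (N : ℕ) (A : Matrix (Fin nx) (Fin nx) ℝ)
    (Wxp : Matrix (Fin nz) (Fin nx) ℝ) (E : Matrix (Fin nx) (Fin m) ℝ) :
    Matrix (Fin (N + 1) × Fin nz) (Fin m) ℝ :=
  Matrix.of fun ni i =>
    if (ni.1 : ℕ) = 0 then 0 else (Wxp * A ^ ((ni.1 : ℕ) - 1) * E) ni.2 i

lemma Grow_zero {nz nx m : ℕ} (N : ℕ) (A : Matrix (Fin nx) (Fin nx) ℝ)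
    (Wxp : Matrix (Fin nz) (Fin nx) ℝ) (E : Matrix (Fin nx) (Fin m) ℝ) :
    blockRow (Gmat N A Wxp E) 0 = 0 := by
  ext j i; simp [blockRow, Gmat]

lemma Grow_pos {nz nx m : ℕ} (N : ℕ) (A : Matrix (Fin nx) (Fin nx) ℝ)
    (Wxp : Matrix (Fin nz) (Fin nx) ℝ) (E : Matrix (Fin nx) (Fin m) ℝ)
    (n : Fin (N + 1)) (hn : 1 ≤ (n : ℕ)) :
    blockRow (Gmat N A Wxp E) n = Wxp * A ^ ((n : ℕ) - 1) * E := by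
  have h : (n : ℕ) ≠ 0 := by omega
  have h' : n ≠ 0 := fun h0 => h (by simp [h0])
  ext j i; simp [blockRow, Gmat, h, h']

lemma keyId {P nz nx m : ℕ} {nu : Fin P → ℕ} {N : ℕ} (hN : 1 ≤ N)
    (A : Matrix (Fin nx) (Fin nx) ℝ)
    (B : (q : Fin P) → Matrix (Fin nx) (Fin (nu q)) ℝ)
    (E : Matrix (Fin nx) (Fin m) ℝ)
    (Wx : Fin P → Matrix (Fin nz) (Fin nx) ℝ)
    (Wu : (p : Fin P) → Matrix (Fin nz) (Fin (nu p)) ℝ)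
    (Φxf : ((q : Fin P) → Matrix (Fin (N + 1) × Fin (nu q)) (Fin m) ℝ) →
      ℕ → Matrix (Fin nx) (Fin m) ℝ)
    (Φs : (q : Fin P) → Matrix (Fin (N + 1) × Fin (nu q)) (Fin m) ℝ)
    (hΦx0 : Φxf Φs 0 = 0)
    (hΦx1 : Φxf Φs 1 = E + ∑ q, B q * blockRow (Φs q) 0)
    (hΦxrec : ∀ n, ∀ _ : 1 ≤ n, ∀ _ : n ≤ N - 1,
      Φxf Φs (n + 1) = A * Φxf Φs n + ∑ q, B q * blockRow (Φs q) ⟨n, Nat.lt_succ_of_le (by omega)⟩)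
    (p : Fin P) (n : Fin (N + 1)) :
    Wx p * Φxf Φs (n : ℕ) + Wu p * blockRow (Φs p) n
      = blockRow ((∑ q, Hblk N A Wx Wu B p q * Φs q) + Gmat N A (Wx p) E) n := by
  rw [blockRow_add, Hrow]
  rcases Nat.eq_zero_or_pos (n : ℕ) with h0 | hpos
  · have hn0 : n = 0 := Fin.ext (by simpa using h0)
    subst hn0
    simp [hΦx0, Grow_zero]
  · rw [phix_formula hN A B E Φxf Φs hΦx1 hΦxrec (n : ℕ) hpos (by omega),
      Grow_pos _ _ _ _ _ hpos]
    rw [Matrix.mul_add, Matrix.mul_sum]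
    have hq : ∀ q : Fin P,
        Wx p * (∑ n' : Fin (N + 1),
            if (n' : ℕ) < (n : ℕ) then
              A ^ ((n : ℕ) - 1 - (n' : ℕ)) * B q * blockRow (Φs q) n' else 0)
          = ∑ n' : Fin (N + 1),
            if (n' : ℕ) < (n : ℕ) then
              Wx p * A ^ ((n : ℕ) - 1 - (n' : ℕ)) * B q * blockRow (Φs q) n' else 0 := by
      intro q
      rw [Matrix.mul_sum]
      refine Finset.sum_congr rfl fun n' _ => ?_
      split
      · rw [← Matrix.mul_assoc, ← Matrix.mul_assoc]
      · simp
    simp only [hq]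
    rw [← Matrix.mul_assoc]
    abel


/-- Affine form of the system-level pseudo-gradient: the partial
gradient of `J^p` with respect to player `p`'s (stacked) input kernel is the affine map
`Φ_u ↦ 2 Σ_q (H^{pp})ᵀ H^{pq} Φ_u^q (W_w W_wᵀ) + h^p` with `h^p` a constant matrix
independent of `Φ_u`; the gradient is expressed through directional derivatives in the
Frobenius inner product. -/
theorem stmt14 {P nz nx m nw : ℕ} {nu : Fin P → ℕ} {N : ℕ} (hN : 1 ≤ N)
    (A : Matrix (Fin nx) (Fin nx) ℝ)
    (B : (q : Fin P) → Matrix (Fin nx) (Fin (nu q)) ℝ)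
    (E : Matrix (Fin nx) (Fin m) ℝ)
    (Wx : Fin P → Matrix (Fin nz) (Fin nx) ℝ)
    (Wu : (p : Fin P) → Matrix (Fin nz) (Fin (nu p)) ℝ)
    (hW : ∀ p, (Wu p)ᵀ * Wx p = 0)
    (Ww : Matrix (Fin m) (Fin nw) ℝ)
    (Φxf : ((q : Fin P) → Matrix (Fin (N + 1) × Fin (nu q)) (Fin m) ℝ) →
      ℕ → Matrix (Fin nx) (Fin m) ℝ)
    (hΦx0 : ∀ Φs, Φxf Φs 0 = 0)
    (hΦx1 : ∀ Φs, Φxf Φs 1 = E + ∑ q, B q * blockRow (Φs q) 0)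
    (hΦxrec : ∀ Φs n, ∀ _ : 1 ≤ n, ∀ _ : n ≤ N - 1,
      Φxf Φs (n + 1) = A * Φxf Φs n + ∑ q, B q * blockRow (Φs q) ⟨n, by omega⟩)
    (J : Fin P → ((q : Fin P) → Matrix (Fin (N + 1) × Fin (nu q)) (Fin m) ℝ) → ℝ)
    (hJ : ∀ p Φs, J p Φs = ∑ n : Fin (N + 1),
      Matrix.trace
        (((Wx p * Φxf Φs n + Wu p * blockRow (Φs p) n) * Ww)ᵀ *
          ((Wx p * Φxf Φs n + Wu p * blockRow (Φs p) n) * Ww)))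
    (p : Fin P) :
    ∃ hp : Matrix (Fin (N + 1) × Fin (nu p)) (Fin m) ℝ,
      ∀ (Φs : (q : Fin P) → Matrix (Fin (N + 1) × Fin (nu q)) (Fin m) ℝ)
        (V : Matrix (Fin (N + 1) × Fin (nu p)) (Fin m) ℝ),
        HasDerivAt (fun t : ℝ => J p (Function.update Φs p (Φs p + t • V)))
          (Matrix.trace
            ((((2 : ℝ) • ∑ q, (Hblk N A Wx Wu B p p)ᵀ * Hblk N A Wx Wu B p q *
                Φs q * (Ww * Wwᵀ)) + hp)ᵀ * V)) 0 := by
  classical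
  refine ⟨(2 : ℝ) • ((Hblk N A Wx Wu B p p)ᵀ * Gmat N A (Wx p) E * (Ww * Wwᵀ)), ?_⟩
  intro Φs V
  have hstack : ∀ Φs' : (q : Fin P) → Matrix (Fin (N + 1) × Fin (nu q)) (Fin m) ℝ,
      J p Φs' = Matrix.trace
        (((((∑ q, Hblk N A Wx Wu B p q * Φs' q) + Gmat N A (Wx p) E) * Ww)ᵀ) *
          ((((∑ q, Hblk N A Wx Wu B p q * Φs' q) + Gmat N A (Wx p) E)) * Ww)) := by
    intro Φs'
    rw [hJ, blockTrace]
    refine Finset.sum_congr rfl fun n _ => ?_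
    rw [blockRow_mul, ← keyId hN A B E Wx Wu Φxf Φs' (hΦx0 Φs') (hΦx1 Φs') (hΦxrec Φs') p n]
  set M : Matrix (Fin (N + 1) × Fin nz) (Fin m) ℝ :=
    (∑ q, Hblk N A Wx Wu B p q * Φs q) + Gmat N A (Wx p) E with hM
  set K : Matrix (Fin (N + 1) × Fin nz) (Fin m) ℝ := Hblk N A Wx Wu B p p * V with hK
  have hupd : ∀ t : ℝ,
      (∑ q, Hblk N A Wx Wu B p q * (Function.update Φs p (Φs p + t • V)) q)
        + Gmat N A (Wx p) E = M + t • K := by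
    intro t
    have hsum : ∀ f : (q : Fin P) → Matrix (Fin (N + 1) × Fin (nu q)) (Fin m) ℝ,
        ∑ q, Hblk N A Wx Wu B p q * f q
          = (∑ q ∈ Finset.univ.erase p, Hblk N A Wx Wu B p q * f q)
            + Hblk N A Wx Wu B p p * f p :=
      fun f => (Finset.sum_erase_add _ _ (Finset.mem_univ p)).symm
    rw [hsum, hM, hsum]
    have herase : ∀ q ∈ Finset.univ.erase p,
        Hblk N A Wx Wu B p q * (Function.update Φs p (Φs p + t • V)) q
          = Hblk N A Wx Wu B p q * Φs q := by
      intro q hq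
      rw [Function.update_of_ne (Finset.mem_erase.mp hq).1]
    rw [Finset.sum_congr rfl herase, Function.update_self, Matrix.mul_add, Matrix.mul_smul]
    rw [hK]
    abel
  have hc : ∀ t : ℝ, J p (Function.update Φs p (Φs p + t • V))
      = Matrix.trace ((M * Ww)ᵀ * (M * Ww))
        + t * (2 * Matrix.trace ((M * Ww)ᵀ * (K * Ww)))
        + t ^ 2 * Matrix.trace ((K * Ww)ᵀ * (K * Ww)) := by
    intro t
    rw [hstack, hupd]
    have hsym : Matrix.trace ((K * Ww)ᵀ * (M * Ww)) = Matrix.trace ((M * Ww)ᵀ * (K * Ww)) := by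
      rw [← Matrix.trace_transpose, Matrix.transpose_mul, Matrix.transpose_transpose]
    simp only [Matrix.add_mul, Matrix.smul_mul, Matrix.transpose_add, Matrix.transpose_smul,
      Matrix.mul_add, Matrix.trace_add, Matrix.trace_smul, smul_eq_mul, Matrix.mul_smul,
      smul_smul, hsym]
    ring
  have hpoly : HasDerivAt
      (fun t : ℝ => Matrix.trace ((M * Ww)ᵀ * (M * Ww))
        + t * (2 * Matrix.trace ((M * Ww)ᵀ * (K * Ww)))
        + t ^ 2 * Matrix.trace ((K * Ww)ᵀ * (K * Ww)))
      (2 * Matrix.trace ((M * Ww)ᵀ * (K * Ww))) 0 := by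
    have h1 : HasDerivAt (fun t : ℝ => t * (2 * Matrix.trace ((M * Ww)ᵀ * (K * Ww))))
        (2 * Matrix.trace ((M * Ww)ᵀ * (K * Ww))) 0 := by
      simpa using (hasDerivAt_id (0 : ℝ)).mul_const (2 * Matrix.trace ((M * Ww)ᵀ * (K * Ww)))
    have h2 : HasDerivAt (fun t : ℝ => t ^ 2 * Matrix.trace ((K * Ww)ᵀ * (K * Ww))) 0 0 := by
      simpa using (hasDerivAt_pow 2 (0 : ℝ)).mul_const (Matrix.trace ((K * Ww)ᵀ * (K * Ww)))
    have h3 := ((hasDerivAt_const (0 : ℝ) (Matrix.trace ((M * Ww)ᵀ * (M * Ww)))).add h1).add h2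
    simp only [zero_add, add_zero] at h3
    exact h3
  have hval : Matrix.trace
        ((((2 : ℝ) • ∑ q, (Hblk N A Wx Wu B p p)ᵀ * Hblk N A Wx Wu B p q *
            Φs q * (Ww * Wwᵀ)) +
          (2 : ℝ) • ((Hblk N A Wx Wu B p p)ᵀ * Gmat N A (Wx p) E * (Ww * Wwᵀ)))ᵀ * V)
      = 2 * Matrix.trace ((M * Ww)ᵀ * (K * Ww)) := by
    have hcomb : ((2 : ℝ) • ∑ q, (Hblk N A Wx Wu B p p)ᵀ * Hblk N A Wx Wu B p q *
            Φs q * (Ww * Wwᵀ)) +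
          (2 : ℝ) • ((Hblk N A Wx Wu B p p)ᵀ * Gmat N A (Wx p) E * (Ww * Wwᵀ))
        = (2 : ℝ) • ((Hblk N A Wx Wu B p p)ᵀ * M * (Ww * Wwᵀ)) := by
      rw [hM, ← smul_add, Matrix.mul_add, Matrix.add_mul, Matrix.mul_sum, Matrix.sum_mul]
      simp [Matrix.mul_assoc]
    rw [hcomb, Matrix.transpose_smul, Matrix.smul_mul, Matrix.trace_smul, smul_eq_mul]
    congr 1
    rw [hK]
    simp only [Matrix.transpose_mul, Matrix.transpose_transpose, Matrix.mul_assoc,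
      Matrix.transpose_smul]
    rw [Matrix.trace_mul_comm]
    simp [Matrix.mul_assoc]
  have hfun : (fun t : ℝ => J p (Function.update Φs p (Φs p + t • V)))
      = fun t : ℝ => Matrix.trace ((M * Ww)ᵀ * (M * Ww))
        + t * (2 * Matrix.trace ((M * Ww)ᵀ * (K * Ww)))
        + t ^ 2 * Matrix.trace ((K * Ww)ᵀ * (K * Ww)) := funext hc
  rw [hfun, hval]
  exact hpoly
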